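/- arXiv:2510.16860 — 3 statements merged into one kernel-verified Lean document; each statement's English description precedes it below -/
import Mathlib

section
/- Let θ ∈ [0,1] and ε ∈ (−1,1). Then for all real numbers x, y, z, (α₂x + α₁y + α₀z)·(β₂x + β₁y + β₀z) = [((1+θ)/4)x² + ((1−θ)/4)y²] − [((1+θ)/4)y² + ((1−θ)/4)z²] + (a₂x + a₁y + a₀z)², where a₁ = −√(θ(1−θ²))/(√2·(1+εθ)), a₂ = −((1−ε)/2)·a₁ and a₀ = −((1+ε)/2)·a₁. -/
noncomputable def dlnAlpha2 (θ : ℝ) : ℝ := (1 + θ) / 2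
noncomputable def dlnAlpha1 (θ : ℝ) : ℝ := -θ
noncomputable def dlnAlpha0 (θ : ℝ) : ℝ := (θ - 1) / 2

noncomputable def dlnBeta2 (θ ε : ℝ) : ℝ :=
  (1 / 4) * (1 + (1 - θ ^ 2) / (1 + ε * θ) ^ 2
    + ε ^ 2 * (θ * (1 - θ ^ 2)) / (1 + ε * θ) ^ 2 + θ)
noncomputable def dlnBeta1 (θ ε : ℝ) : ℝ :=
  (1 / 2) * (1 - (1 - θ ^ 2) / (1 + ε * θ) ^ 2)
noncomputable def dlnBeta0 (θ ε : ℝ) : ℝ :=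
  (1 / 4) * (1 + (1 - θ ^ 2) / (1 + ε * θ) ^ 2
    - ε ^ 2 * (θ * (1 - θ ^ 2)) / (1 + ε * θ) ^ 2 - θ)

noncomputable def dlnA1 (θ ε : ℝ) : ℝ :=
  -(Real.sqrt (θ * (1 - θ ^ 2))) / (Real.sqrt 2 * (1 + ε * θ))
noncomputable def dlnA2 (θ ε : ℝ) : ℝ := -((1 - ε) / 2) * dlnA1 θ ε
noncomputable def dlnA0 (θ ε : ℝ) : ℝ := -((1 + ε) / 2) * dlnA1 θ ε

/-- Scalar G-stability identity of the variable-step DLN method. -/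
theorem dln_G_stability_identity_scalar
    (θ ε : ℝ) (hθ : θ ∈ Set.Icc (0 : ℝ) 1) (hε : ε ∈ Set.Ioo (-1 : ℝ) 1)
    (x y z : ℝ) :
    (dlnAlpha2 θ * x + dlnAlpha1 θ * y + dlnAlpha0 θ * z)
      * (dlnBeta2 θ ε * x + dlnBeta1 θ ε * y + dlnBeta0 θ ε * z)
      = (((1 + θ) / 4) * x ^ 2 + ((1 - θ) / 4) * y ^ 2)
        - (((1 + θ) / 4) * y ^ 2 + ((1 - θ) / 4) * z ^ 2)
        + (dlnA2 θ ε * x + dlnA1 θ ε * y + dlnA0 θ ε * z) ^ 2 := by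
  obtain ⟨h0, h1⟩ := hθ
  obtain ⟨he0, he1⟩ := hε
  have hden : (1 : ℝ) + ε * θ > 0 := by nlinarith
  have hne : (1 : ℝ) + ε * θ ≠ 0 := ne_of_gt hden
  have hnn : 0 ≤ θ * (1 - θ ^ 2) := by nlinarith
  have hs : Real.sqrt (θ * (1 - θ ^ 2)) ^ 2 = θ * (1 - θ ^ 2) := Real.sq_sqrt hnn
  have h2 : Real.sqrt 2 ^ 2 = 2 := Real.sq_sqrt (by norm_num)
  have hA1 : dlnA1 θ ε ^ 2 = θ * (1 - θ ^ 2) / (2 * (1 + ε * θ) ^ 2) := by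
    rw [dlnA1, div_pow, neg_pow, mul_pow, hs, h2]
    ring
  have hsq : (dlnA2 θ ε * x + dlnA1 θ ε * y + dlnA0 θ ε * z) ^ 2
      = dlnA1 θ ε ^ 2 * (-((1 - ε) / 2) * x + y + -((1 + ε) / 2) * z) ^ 2 := by
    rw [dlnA2, dlnA0]; ring
  rw [hsq, hA1]
  simp only [dlnAlpha2, dlnAlpha1, dlnAlpha0, dlnBeta2, dlnBeta1, dlnBeta0]
  have hne' : (1 : ℝ) + θ * ε ≠ 0 := by rw [mul_comm]; exact hne
  field_simp
  ring
end

section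
/- Let H be a real inner product space, θ ∈ [0,1], M ≥ 2, and let ε₁, …, ε_{M−1} ∈ (−1,1). For n = 1, …, M−1 denote by α₀, α₁, α₂ the DLN α-coefficients and by β₀⁽ⁿ⁾, β₁⁽ⁿ⁾, β₂⁽ⁿ⁾ the DLN β-coefficients with variability εₙ, and by a₀⁽ⁿ⁾, a₁⁽ⁿ⁾, a₂⁽ⁿ⁾ the auxiliary coefficients with variability εₙ. Then for every sequence v₀, v₁, …, v_M in H, Σ_{n=1}^{M−1} ⟨α₂v_{n+1}+α₁v_n+α₀v_{n−1}, β₂⁽ⁿ⁾v_{n+1}+β₁⁽ⁿ⁾v_n+β₀⁽ⁿ⁾v_{n−1}⟩ = ‖(v_M, v_{M−1})‖²_{G(θ)} − ‖(v_1, v_0)‖²_{G(θ)} + Σ_{n=1}^{M−1} ‖a₂⁽ⁿ⁾v_{n+1}+a₁⁽ⁿ⁾v_n+a₀⁽ⁿ⁾v_{n−1}‖². -/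
open scoped RealInnerProductSpace
/-- The square of the `G(θ)`-norm of the pair `(u, v)`. -/
noncomputable def gNormSq {H : Type*} [NormedAddCommGroup H] (θ : ℝ) (u v : H) : ℝ :=
  ((1 + θ) / 4) * ‖u‖ ^ 2 + ((1 - θ) / 4) * ‖v‖ ^ 2


lemma dln_step {H : Type*} [NormedAddCommGroup H] [InnerProductSpace ℝ H]
    (θ ε : ℝ) (hθ0 : 0 ≤ θ) (hθ1 : θ ≤ 1) (hε0 : -1 < ε) (hε1 : ε < 1) (x y z : H) :
    ⟪dlnAlpha2 θ • x + dlnAlpha1 θ • y + dlnAlpha0 θ • z,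
      dlnBeta2 θ ε • x + dlnBeta1 θ ε • y + dlnBeta0 θ ε • z⟫
    = gNormSq θ x y - gNormSq θ y z
      + ‖dlnA2 θ ε • x + dlnA1 θ ε • y + dlnA0 θ ε • z‖ ^ 2 := by
  have hd : (0:ℝ) < 1 + ε * θ := by nlinarith
  have hd' : (1 + ε * θ) ≠ 0 := ne_of_gt hd
  have ha : (dlnA1 θ ε) ^ 2 = θ * (1 - θ ^ 2) / (2 * (1 + ε * θ) ^ 2) := by
    unfold dlnA1
    rw [div_pow, neg_pow, mul_pow]
    rw [Real.sq_sqrt (by nlinarith : (0:ℝ) ≤ θ * (1 - θ ^ 2)),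
      Real.sq_sqrt (by norm_num : (0:ℝ) ≤ 2)]
    ring
  have hvec : dlnA2 θ ε • x + dlnA1 θ ε • y + dlnA0 θ ε • z
      = (-(dlnA1 θ ε)) • (((1 - ε) / 2) • x + (-1 : ℝ) • y + ((1 + ε) / 2) • z) := by
    rw [dlnA2, dlnA0]
    module
  rw [hvec, norm_smul, mul_pow, Real.norm_eq_abs, abs_neg, sq_abs, ha]
  rw [gNormSq, gNormSq, ← real_inner_self_eq_norm_sq x, ← real_inner_self_eq_norm_sq y,
    ← real_inner_self_eq_norm_sq z,
    ← real_inner_self_eq_norm_sq (((1 - ε) / 2) • x + (-1 : ℝ) • y + ((1 + ε) / 2) • z)]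
  simp only [inner_add_left, inner_add_right, real_inner_smul_left, real_inner_smul_right,
    dlnAlpha2, dlnAlpha1, dlnAlpha0, dlnBeta2, dlnBeta1, dlnBeta0]
  rw [real_inner_comm y x, real_inner_comm z x, real_inner_comm z y]
  have hd'' : (1 + θ * ε) ≠ 0 := by rw [mul_comm]; exact hd'
  field_simp
  ring

/-- Telescoped G-stability identity of the variable-step DLN method. -/
theorem dln_G_stability_telescoped {H : Type*} [NormedAddCommGroup H] [InnerProductSpace ℝ H]
    (θ : ℝ) (hθ : θ ∈ Set.Icc (0 : ℝ) 1) (M : ℕ) (hM : 2 ≤ M)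
    (ε : ℕ → ℝ) (hε : ∀ n, 1 ≤ n → n ≤ M - 1 → ε n ∈ Set.Ioo (-1 : ℝ) 1)
    (v : ℕ → H) :
    ∑ n ∈ Finset.Icc 1 (M - 1),
        ⟪dlnAlpha2 θ • v (n + 1) + dlnAlpha1 θ • v n + dlnAlpha0 θ • v (n - 1),
          dlnBeta2 θ (ε n) • v (n + 1) + dlnBeta1 θ (ε n) • v n
            + dlnBeta0 θ (ε n) • v (n - 1)⟫
      = gNormSq θ (v M) (v (M - 1)) - gNormSq θ (v 1) (v 0)
        + ∑ n ∈ Finset.Icc 1 (M - 1),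
            ‖dlnA2 θ (ε n) • v (n + 1) + dlnA1 θ (ε n) • v n
              + dlnA0 θ (ε n) • v (n - 1)‖ ^ 2 := by
  obtain ⟨hθ0, hθ1⟩ := hθ
  have key : ∀ n ∈ Finset.Icc 1 (M - 1),
      ⟪dlnAlpha2 θ • v (n + 1) + dlnAlpha1 θ • v n + dlnAlpha0 θ • v (n - 1),
        dlnBeta2 θ (ε n) • v (n + 1) + dlnBeta1 θ (ε n) • v n
          + dlnBeta0 θ (ε n) • v (n - 1)⟫
      = (gNormSq θ (v (n + 1)) (v n) - gNormSq θ (v n) (v (n - 1)))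
        + ‖dlnA2 θ (ε n) • v (n + 1) + dlnA1 θ (ε n) • v n
            + dlnA0 θ (ε n) • v (n - 1)‖ ^ 2 := by
    intro n hn
    rw [Finset.mem_Icc] at hn
    obtain ⟨h1, h2⟩ := hn
    obtain ⟨he1, he2⟩ := hε n h1 h2
    exact dln_step θ (ε n) hθ0 hθ1 he1 he2 _ _ _
  rw [Finset.sum_congr rfl key, Finset.sum_add_distrib]
  congr 1
  set F : ℕ → ℝ := fun k => gNormSq θ (v (k + 1)) (v k) with hF
  have hsum : ∑ n ∈ Finset.Icc 1 (M - 1),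
      (gNormSq θ (v (n + 1)) (v n) - gNormSq θ (v n) (v (n - 1)))
      = ∑ i ∈ Finset.range (M - 1), (F (i + 1) - F i) := by
    have hIcc : Finset.Icc 1 (M - 1) = Finset.Ico 1 M := by
      apply Finset.ext
      intro k
      simp only [Finset.mem_Icc, Finset.mem_Ico]
      omega
    rw [hIcc, Finset.sum_Ico_eq_sum_range]
    apply Finset.sum_congr rfl
    intro i _
    simp only [hF, Nat.add_sub_cancel]
    rw [show 1 + i = i + 1 by omega, show i + 1 - 1 = i from rfl]
  rw [hsum, Finset.sum_range_sub F (M - 1)]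
  have hM1 : M - 1 + 1 = M := by omega
  simp [hF, hM1]
end

section
/- Let H and K be real inner product spaces, θ ∈ [0,1], κ ≥ 0, fix n ≥ 1 and ε ∈ (−1,1), and let α₀, α₁, α₂ and β₀, β₁, β₂ be the DLN coefficients with variability ε. Let u_{n−1}, u_n, u_{n+1} ∈ H, g_{n−1}, g_n, g_{n+1} ∈ K, and W_n, W_{n+1} ∈ ℝ. If ⟨α₂u_{n+1}+α₁u_n+α₀u_{n−1}, β₂u_{n+1}+β₁u_n+β₀u_{n−1}⟩ + κ·⟨α₂g_{n+1}+α₁g_n+α₀g_{n−1}, β₂g_{n+1}+β₁g_n+β₀g_{n−1}⟩ + κ·(W_{n+1} − W_n) ≤ 0, then the discrete energy E_n := ‖(u_{n+1}, u_n)‖²_{G(θ)} + κ·(‖(g_{n+1}, g_n)‖²_{G(θ)} + W_{n+1}) satisfies E_n ≤ E_{n−1}, where E_{n−1} := ‖(u_n, u_{n−1})‖²_{G(θ)} + κ·(‖(g_n, g_{n−1})‖²_{G(θ)} + W_n). (Abstract form of the discrete energy dissipation law for the DLN scheme.) -/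
open scoped RealInnerProductSpace

lemma dln_key {H : Type*} [NormedAddCommGroup H] [InnerProductSpace ℝ H]
    (θ ε : ℝ) (hθ0 : 0 ≤ θ) (hθ1 : θ ≤ 1) (hε0 : -1 < ε) (hε1 : ε < 1)
    (x y z : H) :
    gNormSq θ x y - gNormSq θ y z ≤
      ⟪dlnAlpha2 θ • x + dlnAlpha1 θ • y + dlnAlpha0 θ • z,
        dlnBeta2 θ ε • x + dlnBeta1 θ ε • y + dlnBeta0 θ ε • z⟫ := by
  have hs : (0:ℝ) < 1 + ε * θ := by nlinarith
  have hs2 : (1 + ε * θ) ^ 2 ≠ 0 := by positivity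
  have hid : ⟪dlnAlpha2 θ • x + dlnAlpha1 θ • y + dlnAlpha0 θ • z,
        dlnBeta2 θ ε • x + dlnBeta1 θ ε • y + dlnBeta0 θ ε • z⟫
      = gNormSq θ x y - gNormSq θ y z
        + θ * (1 - θ ^ 2) / (8 * (1 + ε * θ) ^ 2) *
          ‖(1 - ε) • x - (2:ℝ) • y + (1 + ε) • z‖ ^ 2 := by
    have hx : ‖x‖ ^ 2 = ⟪x, x⟫ := (real_inner_self_eq_norm_sq x).symm
    have hy : ‖y‖ ^ 2 = ⟪y, y⟫ := (real_inner_self_eq_norm_sq y).symm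
    have hz : ‖z‖ ^ 2 = ⟪z, z⟫ := (real_inner_self_eq_norm_sq z).symm
    have hd : ‖(1 - ε) • x - (2:ℝ) • y + (1 + ε) • z‖ ^ 2
        = ⟪(1 - ε) • x - (2:ℝ) • y + (1 + ε) • z,
           (1 - ε) • x - (2:ℝ) • y + (1 + ε) • z⟫ :=
      (real_inner_self_eq_norm_sq _).symm
    simp only [gNormSq, hx, hy, hz, hd, dlnAlpha2, dlnAlpha1, dlnAlpha0,
      dlnBeta2, dlnBeta1, dlnBeta0, inner_add_left, inner_add_right,
      inner_sub_left, inner_sub_right, real_inner_smul_left, real_inner_smul_right]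
    rw [real_inner_comm y x, real_inner_comm z x, real_inner_comm z y]
    have hs2' : 1 + θ * ε ≠ 0 := by rw [mul_comm]; exact hs.ne'
    field_simp
    ring
  rw [hid]
  have : 0 ≤ θ * (1 - θ ^ 2) / (8 * (1 + ε * θ) ^ 2) *
      ‖(1 - ε) • x - (2:ℝ) • y + (1 + ε) • z‖ ^ 2 := by
    apply mul_nonneg
    · apply div_nonneg
      · nlinarith
      · positivity
    · positivity
  linarith

/-- Abstract form of the discrete energy dissipation law for the DLN scheme. -/
theorem dln_discrete_energy_dissipation_step
    {H K : Type*} [NormedAddCommGroup H] [InnerProductSpace ℝ H]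
    [NormedAddCommGroup K] [InnerProductSpace ℝ K]
    (θ : ℝ) (hθ : θ ∈ Set.Icc (0 : ℝ) 1) (κ : ℝ) (hκ : 0 ≤ κ)
    (ε : ℝ) (hε : ε ∈ Set.Ioo (-1 : ℝ) 1)
    (um u0 up : H) (gm g0 gp : K) (W0 Wp : ℝ)
    (h : ⟪dlnAlpha2 θ • up + dlnAlpha1 θ • u0 + dlnAlpha0 θ • um,
            dlnBeta2 θ ε • up + dlnBeta1 θ ε • u0 + dlnBeta0 θ ε • um⟫
          + κ * ⟪dlnAlpha2 θ • gp + dlnAlpha1 θ • g0 + dlnAlpha0 θ • gm,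
            dlnBeta2 θ ε • gp + dlnBeta1 θ ε • g0 + dlnBeta0 θ ε • gm⟫
          + κ * (Wp - W0) ≤ 0) :
    gNormSq θ up u0 + κ * (gNormSq θ gp g0 + Wp)
      ≤ gNormSq θ u0 um + κ * (gNormSq θ g0 gm + W0) := by
  obtain ⟨hθ0, hθ1⟩ := hθ
  obtain ⟨hε0, hε1⟩ := hε
  have hu := dln_key θ ε hθ0 hθ1 hε0 hε1 up u0 um
  have hg := dln_key θ ε hθ0 hθ1 hε0 hε1 gp g0 gm
  have hg' := mul_le_mul_of_nonneg_left hg hκ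
  nlinarith [hu, hg', h]
end
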